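/- Let n ≥ 2, let k be an integer with 2 ≤ k ≤ n, let i_1,…,i_k be pairwise distinct indices in {1,…,n}, and let s_1,…,s_k ∈ {+1,−1}. Define vectors v_1,…,v_k in ℝ^n by v_j = e_{i_j} + s_j · e_{i_{j+1}} for 1 ≤ j ≤ k, where indices are taken cyclically (i_{k+1} = i_1). Then the vectors v_1,…,v_k are linearly dependent if and only if the number of indices j with s_j = +1 is even. -/

import Mathlib

noncomputable section

/-- Let `i 0, …, i (k-1)` (`2 ≤ k ≤ n`) be pairwise distinct indices and
`s j ∈ {1, -1}` signs, and let `v j = e (i j) + s j • e (i (j+1))` with `j + 1` taken cyclically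
mod `k` (the edge vectors of a cycle in a signed graph, an edge being red when `s j = 1` and
black when `s j = -1`).  Then `v` is linearly dependent iff the number of `j` with `s j = 1`
is even. -/
theorem cycle_dependent_iff_even_red {n : ℕ} (hn : 2 ≤ n) (k : ℕ) (hk2 : 2 ≤ k) (hkn : k ≤ n)
    (idx : Fin k → Fin n) (hidx : Function.Injective idx)
    (s : Fin k → ℝ) (hs : ∀ j, s j = 1 ∨ s j = -1)
    (v : Fin k → EuclideanSpace ℝ (Fin n))
    (hv : ∀ j : Fin k, v j = EuclideanSpace.single (idx j) 1 +
      s j • EuclideanSpace.single (idx ⟨((j : ℕ) + 1) % k, Nat.mod_lt _ (by omega)⟩) 1) :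
    ¬ LinearIndependent ℝ v ↔ Even (Finset.univ.filter fun j => s j = 1).card := by
  haveI : NeZero k := ⟨by omega⟩
  letI : NatCast (Fin k) := Fin.NatCast.instNatCast k
  have hone : (1 : Fin k).val = 1 := by
    rw [Fin.val_one']; exact Nat.mod_eq_of_lt hk2
  have hv' : ∀ j : Fin k, v j = EuclideanSpace.single (idx j) 1 +
      s j • EuclideanSpace.single (idx (j + 1)) 1 := by
    intro j
    rw [hv j]
    congr 2
    ext
    simp [Fin.add_def, hone]
  -- rearrangement of the sum
  have coordsum : ∀ c : Fin k → ℝ, ∑ j, c j • v j =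
      ∑ m, (c m + s (m - 1) * c (m - 1)) • EuclideanSpace.single (idx m) (1:ℝ) := by
    intro c
    have h1 : ∑ j, c j • v j =
        ∑ j, (c j • EuclideanSpace.single (idx j) (1:ℝ)
          + (s j * c j) • EuclideanSpace.single (idx (j+1)) (1:ℝ)) := by
      refine Finset.sum_congr rfl fun j _ => ?_
      rw [hv' j, smul_add, smul_smul, mul_comm]
    rw [h1, Finset.sum_add_distrib]
    have h2 : ∑ j, (s j * c j) • EuclideanSpace.single (idx (j+1)) (1:ℝ)
        = ∑ m, (s (m - 1) * c (m - 1)) • EuclideanSpace.single (idx m) (1:ℝ) := by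
      refine Fintype.sum_equiv (Equiv.addRight (1 : Fin k)) _ _ fun j => ?_
      simp
    rw [h2, ← Finset.sum_add_distrib]
    refine Finset.sum_congr rfl fun m _ => ?_
    rw [← add_smul]
  -- extracting coordinates
  have coordzero : ∀ d : Fin k → ℝ,
      (∑ m, d m • EuclideanSpace.single (idx m) (1:ℝ)) = 0 → ∀ m, d m = 0 := by
    intro d hd m
    have h := congrArg (fun x : EuclideanSpace ℝ (Fin n) =>
      inner (𝕜 := ℝ) (EuclideanSpace.single (idx m) (1:ℝ)) x) hd
    simp only [inner_sum, real_inner_smul_right, inner_zero_right,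
      EuclideanSpace.inner_single_left, EuclideanSpace.single_apply, map_one, one_mul] at h
    simpa [hidx.eq_iff] using h
  -- product of signs
  set r := (Finset.univ.filter fun j => s j = 1).card with hr
  have prodsign : ∏ j, (-(s j)) = (-1 : ℝ) ^ r := by
    have : ∀ j ∈ Finset.univ, -(s j) = if s j = 1 then (-1:ℝ) else 1 := by
      intro j _
      rcases hs j with h | h <;> simp [h] <;> norm_num
    rw [Finset.prod_congr rfl this, Finset.prod_ite, Finset.prod_const, Finset.prod_const,
      one_pow, mul_one]
  have prod_iff : (∏ j, (-(s j)) = 1) ↔ Even r := by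
    rw [prodsign]
    exact neg_one_pow_eq_one_iff_even (by norm_num)
  rw [← prod_iff]
  constructor
  · intro hdep
    obtain ⟨c, hc0, j0, hj0⟩ := Fintype.not_linearIndependent_iff.mp hdep
    rw [coordsum] at hc0
    have hrec : ∀ j : Fin k, c (j + 1) = -(s j) * c j := by
      intro j
      have := coordzero _ hc0 (j + 1)
      simp only [add_sub_cancel_right] at this
      linarith
    have claim : ∀ t : ℕ, c (j0 + (t : Fin k)) =
        (∏ u ∈ Finset.range t, -(s (j0 + (u : Fin k)))) * c j0 := by
      intro t
      induction t with
      | zero => simp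
      | succ t ih =>
        have hcast : ((t + 1 : ℕ) : Fin k) = (t : Fin k) + 1 := Fin.ext (by simp only [Fin.val_add, Fin.val_natCast, hone, Nat.mod_add_mod])
        rw [hcast, ← add_assoc, hrec, ih, Finset.prod_range_succ]
        ring
    have hk0 : ((k : ℕ) : Fin k) = 0 := Fin.natCast_self k
    have := claim k
    rw [hk0, add_zero] at this
    have hprod : (∏ u ∈ Finset.range k, -(s (j0 + (u : Fin k)))) = 1 := by
      have h' : (∏ u ∈ Finset.range k, -(s (j0 + (u : Fin k)))) * c j0 = 1 * c j0 := by
        rw [one_mul]; exact this.symm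
      exact mul_right_cancel₀ hj0 h'
    have hre : ∏ u ∈ Finset.range k, -(s (j0 + (u : Fin k))) = ∏ j, -(s j) := by
      rw [← Fin.prod_univ_eq_prod_range (fun u => -(s (j0 + (u : Fin k)))) k]
      simp only [Fin.cast_val_eq_self]
      exact Equiv.prod_comp (Equiv.addLeft j0) (fun j => -(s j))
    rw [← hre, hprod]
  · intro hprod
    set c : Fin k → ℝ := fun j => ∏ u ∈ Finset.range j.val, -(s (u : Fin k)) with hc
    have hprodall : ∏ u ∈ Finset.range k, -(s (u : Fin k)) = 1 := by
      rw [← Fin.prod_univ_eq_prod_range (fun u => -(s (u : Fin k))) k]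
      simp only [Fin.cast_val_eq_self]
      exact hprod
    have key : ∀ m : Fin k, c m + s (m - 1) * c (m - 1) = 0 := by
      intro m
      have hsub : ((m - 1 : Fin k) : ℕ) = ((m : ℕ) + (k - 1)) % k := by
        rw [Fin.sub_def]
        simp only [Fin.val_one']
        rw [Nat.mod_eq_of_lt hk2, Nat.add_comm]
      by_cases h0 : (m : ℕ) = 0
      · have hsval : ((m - 1 : Fin k) : ℕ) = k - 1 := by
          rw [hsub, h0, Nat.zero_add, Nat.mod_eq_of_lt (by omega)]
        have hs1 : s (m - 1) = s (((k - 1 : ℕ) : Fin k)) := by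
          congr 1; ext; rw [hsval, Fin.val_natCast, Nat.mod_eq_of_lt (by omega)]
        have hcm : c m = 1 := by simp only [hc]; simp [h0]
        have hcm1 : c (m - 1) = ∏ u ∈ Finset.range (k - 1), -(s (u : Fin k)) := by
          simp only [hc]; rw [hsval]
        rw [hcm, hcm1, hs1]
        have hstep : -(s (((k - 1 : ℕ) : Fin k))) * ∏ u ∈ Finset.range (k - 1), -(s (u : Fin k))
            = ∏ u ∈ Finset.range k, -(s (u : Fin k)) := by
          have hk1 : k - 1 + 1 = k := by omega
          have h2 := Finset.prod_range_succ_comm (fun u => -(s (u : Fin k))) (k - 1)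
          rw [hk1] at h2
          exact h2.symm
        rw [hprodall] at hstep
        rw [neg_mul] at hstep
        linarith
      · have hsval : ((m - 1 : Fin k) : ℕ) = (m : ℕ) - 1 := by
          have hm := m.isLt
          have h1 : (m : ℕ) + (k - 1) = ((m : ℕ) - 1) + k := by omega
          rw [hsub, h1, Nat.add_mod_right, Nat.mod_eq_of_lt (by omega)]
        have hs1 : s (m - 1) = s ((((m : ℕ) - 1 : ℕ) : Fin k)) := by
          have hm := m.isLt
          congr 1; ext; rw [hsval, Fin.val_natCast, Nat.mod_eq_of_lt (by omega)]
        have hcm1 : c (m - 1) = ∏ u ∈ Finset.range ((m : ℕ) - 1), -(s (u : Fin k)) := by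
          simp only [hc]; rw [hsval]
        have hcm : c m = ∏ u ∈ Finset.range (((m : ℕ) - 1) + 1), -(s (u : Fin k)) := by
          simp only [hc]
          have h1 : ((m : ℕ) - 1) + 1 = (m : ℕ) := by omega
          rw [h1]
        rw [hcm, hcm1, hs1, Finset.prod_range_succ]
        ring
    refine Fintype.not_linearIndependent_iff.mpr ⟨c, ?_, ⟨0, ?_⟩⟩
    · rw [coordsum c]
      exact Finset.sum_eq_zero fun m _ => by rw [key m, zero_smul]
    · simp only [hc]
      norm_num
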